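/- The operator P ↦ skew(Curl P) + tr(Curl P)·Id₃ restricted to skew-symmetric valued fields is not cancelling: ℝ·Id₃ ⊆ ⋂_{ξ ∈ ℝ³∖{0}} { skew(S·Anti ξ) + tr(S·Anti ξ)·Id₃ : S ∈ ℝ^{3×3} skew-symmetric }. -/

import Mathlib

open Matrix

noncomputable section

def Anti (ξ : Fin 3 → ℝ) : Matrix (Fin 3) (Fin 3) ℝ :=
  !![0, -ξ 2, ξ 1; ξ 2, 0, -ξ 0; -ξ 1, ξ 0, 0]

def sym (X : Matrix (Fin 3) (Fin 3) ℝ) : Matrix (Fin 3) (Fin 3) ℝ := (1/2 : ℝ) • (X + Xᵀ)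

def skw (X : Matrix (Fin 3) (Fin 3) ℝ) : Matrix (Fin 3) (Fin 3) ℝ := (1/2 : ℝ) • (X - Xᵀ)

def dev (X : Matrix (Fin 3) (Fin 3) ℝ) : Matrix (Fin 3) (Fin 3) ℝ :=
  X - (Matrix.trace X / 3) • (1 : Matrix (Fin 3) (Fin 3) ℝ)

def cross (a b : Fin 3 → ℝ) : Fin 3 → ℝ :=
  ![a 1 * b 2 - a 2 * b 1, a 2 * b 0 - a 0 * b 2, a 0 * b 1 - a 1 * b 0]

theorem stmt_11 (c : ℝ) (ξ : Fin 3 → ℝ) (hξ : ξ ≠ 0) :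
    ∃ S : Matrix (Fin 3) (Fin 3) ℝ, Sᵀ = -S ∧
      skw (S * Anti ξ) + Matrix.trace (S * Anti ξ) • (1 : Matrix (Fin 3) (Fin 3) ℝ) =
        c • (1 : Matrix (Fin 3) (Fin 3) ℝ) := by
  have hnpos : 0 < ξ 0 ^ 2 + ξ 1 ^ 2 + ξ 2 ^ 2 := by
    rcases (by positivity : (0:ℝ) ≤ ξ 0 ^ 2 + ξ 1 ^ 2 + ξ 2 ^ 2).lt_or_eq with h | h
    · exact h
    · exfalso
      apply hξ
      have h0 : ξ 0 = 0 := by nlinarith [sq_nonneg (ξ 0), sq_nonneg (ξ 1), sq_nonneg (ξ 2)]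
      have h1 : ξ 1 = 0 := by nlinarith [sq_nonneg (ξ 0), sq_nonneg (ξ 1), sq_nonneg (ξ 2)]
      have h2 : ξ 2 = 0 := by nlinarith [sq_nonneg (ξ 0), sq_nonneg (ξ 1), sq_nonneg (ξ 2)]
      funext i; fin_cases i <;> simp [h0, h1, h2]
  have hne : ξ 0 ^ 2 + ξ 1 ^ 2 + ξ 2 ^ 2 ≠ 0 := ne_of_gt hnpos
  obtain ⟨t, key⟩ : ∃ t : ℝ, t * (ξ 0 ^ 2 + ξ 1 ^ 2 + ξ 2 ^ 2) = -c / 2 :=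
    ⟨-c / (2 * (ξ 0 ^ 2 + ξ 1 ^ 2 + ξ 2 ^ 2)), by field_simp⟩
  refine ⟨Anti (t • ξ), ?_, ?_⟩
  · ext i j
    fin_cases i <;> fin_cases j <;> simp [Anti] <;> ring
  · ext i j
    fin_cases i <;> fin_cases j <;>
      simp [Anti, skw, Matrix.mul_apply, Matrix.trace, Matrix.diag, Fin.sum_univ_three,
        Matrix.one_apply, transpose_apply, vecHead, vecTail] <;>
      first
        | ring1
        | linear_combination (-2 : ℝ) * key
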